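/- Let x : ℤ^d → ℝ be a Birkhoff configuration, i.e. for all k ∈ ℤ^d and l ∈ ℤ, either the shifted configuration τ_{k,l}x (defined by (τ_{k,l}x)_i = x_{i+k} + l) satisfies τ_{k,l}x ≥ x pointwise or τ_{k,l}x ≤ x pointwise. Then x has a rotation vector ω ∈ ℝ^d (meaning lim_{n→∞} x_{ni}/n = ⟨ω,i⟩ for all i ∈ ℤ^d) and moreover |x_i − x_0 − ⟨ω, i⟩| ≤ 1 for all i ∈ ℤ^d. -/

import Mathlib

open scoped BigOperators

/-- The shift operator `(τ_{k,l} x)_i = x_{i+k} + l`. -/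
def tau {d : ℕ} (k : Fin d → ℤ) (l : ℤ) (x : (Fin d → ℤ) → ℝ) : (Fin d → ℤ) → ℝ :=
  fun i => x (i + k) + l

/-- A configuration is Birkhoff if every integer shift is pointwise comparable to it. -/
def IsBirkhoff {d : ℕ} (x : (Fin d → ℤ) → ℝ) : Prop :=
  ∀ (k : Fin d → ℤ) (l : ℤ), tau k l x ≤ x ∨ x ≤ tau k l x

/-- `x` has rotation vector `ω` : `lim_{n→∞} x_{ni}/n = ⟨ω,i⟩` for all `i`. -/
def HasRotVec {d : ℕ} (x : (Fin d → ℤ) → ℝ) (ω : Fin d → ℝ) : Prop :=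
  ∀ i : Fin d → ℤ, Filter.Tendsto (fun n : ℕ => x ((n : ℤ) • i) / n) Filter.atTop
    (nhds (∑ k, ω k * (i k : ℝ)))

lemma quasi {d : ℕ} (x : (Fin d → ℤ) → ℝ) (hx : IsBirkhoff x) (a b : Fin d → ℤ) :
    |x (a + b) - x a - (x b - x 0)| ≤ 1 := by
  set c := x 0 - x b with hc
  have hA : ∀ l : ℤ, c < l → x a ≤ x (a + b) + l := by
    intro l hl
    rcases hx b l with h | h
    · exfalso
      have h0 := h 0
      simp only [tau, zero_add] at h0
      linarith
    · simpa [tau] using h a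
  have hB : ∀ l : ℤ, (l : ℝ) < c → x (a + b) + l ≤ x a := by
    intro l hl
    rcases hx b l with h | h
    · simpa [tau] using h a
    · exfalso
      have h0 := h 0
      simp only [tau, zero_add] at h0
      linarith
  have h1 := hA (⌊c⌋ + 1) (by push_cast; linarith [Int.lt_floor_add_one c])
  have h2 := hB (⌈c⌉ - 1) (by push_cast; linarith [Int.ceil_lt_add_one c])
  have hf := Int.lt_floor_add_one c
  have hcl := Int.le_ceil c
  have hf2 := Int.floor_le c
  rw [abs_le]
  push_cast at h1 h2
  constructor <;> linarith

lemma seqBound {d : ℕ} (x : (Fin d → ℤ) → ℝ) (hx : IsBirkhoff x) (k : Fin d → ℤ) :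
    ∀ n : ℕ, |x ((n : ℤ) • k) - x 0 - n * (x k - x 0)| ≤ n := by
  intro n
  induction n with
  | zero => simp
  | succ n ih =>
    have h1 := quasi x hx ((n : ℤ) • k) k
    have hsm : (((n : ℕ) + 1 : ℕ) : ℤ) • k = (n : ℤ) • k + k := by
      push_cast; rw [add_smul, one_smul]
    rw [hsm]
    have key : x ((n : ℤ) • k + k) - x 0 - ((n : ℕ) + 1 : ℕ) * (x k - x 0)
        = (x ((n : ℤ) • k + k) - x ((n : ℤ) • k) - (x k - x 0))
          + (x ((n : ℤ) • k) - x 0 - n * (x k - x 0)) := by push_cast; ring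
    rw [key]
    have habs := abs_add_le (x ((n : ℤ) • k + k) - x ((n : ℤ) • k) - (x k - x 0))
      (x ((n : ℤ) • k) - x 0 - n * (x k - x 0))
    push_cast
    linarith

lemma cauchy_est {d : ℕ} (x : (Fin d → ℤ) → ℝ) (hx : IsBirkhoff x) (k : Fin d → ℤ)
    (n m : ℕ) (hn : 1 ≤ n) (hm : 1 ≤ m) :
    |(x ((n : ℤ) • k) - x 0) / n - (x ((m : ℤ) • k) - x 0) / m| ≤ 1 / n + 1 / m := by
  have key : ∀ p q : ℕ, 1 ≤ p → 1 ≤ q →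
      |(x (((p * q : ℕ) : ℤ) • k) - x 0) / (p * q : ℕ) - (x ((q : ℤ) • k) - x 0) / q|
        ≤ 1 / q := by
    intro p q hp hq
    have hb := seqBound x hx ((q : ℤ) • k) p
    have hsm : ((p : ℤ)) • ((q : ℤ) • k) = ((p * q : ℕ) : ℤ) • k := by
      rw [smul_smul]; push_cast; ring_nf
    rw [hsm] at hb
    have hp0 : (0 : ℝ) < p := by exact_mod_cast hp
    have hq0 : (0 : ℝ) < q := by exact_mod_cast hq
    have heq : (x (((p * q : ℕ) : ℤ) • k) - x 0) / (p * q : ℕ) - (x ((q : ℤ) • k) - x 0) / q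
        = (x (((p * q : ℕ) : ℤ) • k) - x 0 - p * (x ((q : ℤ) • k) - x 0)) / ((p : ℝ) * q) := by
      push_cast; field_simp
    rw [heq, abs_div, abs_of_pos (by positivity : (0 : ℝ) < (p : ℝ) * q)]
    calc |x (((p * q : ℕ) : ℤ) • k) - x 0 - p * (x ((q : ℤ) • k) - x 0)| / ((p : ℝ) * q)
        ≤ (p : ℝ) / ((p : ℝ) * q) := by gcongr
      _ = 1 / q := by field_simp
  have h1 := key m n hm hn
  have h2 := key n m hn hm
  rw [Nat.mul_comm n m] at h2
  have htri := abs_sub_le ((x ((n : ℤ) • k) - x 0) / n)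
    ((x (((m * n : ℕ) : ℤ) • k) - x 0) / (m * n : ℕ)) ((x ((m : ℤ) • k) - x 0) / m)
  rw [abs_sub_comm] at h1
  linarith

lemma exists_lim {d : ℕ} (x : (Fin d → ℤ) → ℝ) (hx : IsBirkhoff x) (k : Fin d → ℤ) :
    ∃ L, Filter.Tendsto (fun n : ℕ => (x ((n : ℤ) • k) - x 0) / n) Filter.atTop (nhds L) := by
  set a : ℕ → ℝ := fun n => (x ((n : ℤ) • k) - x 0) / n with ha
  have hC : CauchySeq (fun n => a (n + 1)) := by
    apply cauchySeq_of_le_tendsto_0 (fun N : ℕ => 2 / ((N : ℝ) + 1))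
    · intro n m N hn hm
      have hest := cauchy_est x hx k (n + 1) (m + 1) (by omega) (by omega)
      rw [Real.dist_eq]
      have e1 : (1 : ℝ) / ((n : ℝ) + 1) ≤ 1 / ((N : ℝ) + 1) := by
        gcongr
      have e2 : (1 : ℝ) / ((m : ℝ) + 1) ≤ 1 / ((N : ℝ) + 1) := by
        gcongr
      push_cast at hest
      calc |a (n + 1) - a (m + 1)| ≤ 1 / ((n : ℝ) + 1) + 1 / ((m : ℝ) + 1) := by
            simpa [ha] using hest
        _ ≤ 2 / ((N : ℝ) + 1) := by
            have h2 : (2 : ℝ) / ((N : ℝ) + 1) = 1 / ((N : ℝ) + 1) + 1 / ((N : ℝ) + 1) := by ring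
            linarith
    · have h0 := tendsto_one_div_add_atTop_nhds_zero_nat (𝕜 := ℝ)
      have := h0.const_mul (2 : ℝ)
      simpa [mul_one_div, div_eq_mul_inv] using this
  obtain ⟨L, hL⟩ := cauchySeq_tendsto_of_complete hC
  exact ⟨L, (Filter.tendsto_add_atTop_iff_nat 1).mp hL⟩

theorem stmt0 {d : ℕ} (x : (Fin d → ℤ) → ℝ) (hx : IsBirkhoff x) :
    ∃ ω : Fin d → ℝ, HasRotVec x ω ∧
      ∀ i : Fin d → ℤ, |x i - x 0 - ∑ k, ω k * (i k : ℝ)| ≤ 1 := by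
  choose φ hφ using fun k => exists_lim x hx k
  have hbd : ∀ k, |x k - x 0 - φ k| ≤ 1 := by
    intro k
    have hT : Filter.Tendsto (fun n : ℕ => |(x ((n : ℤ) • k) - x 0) / n - (x k - x 0)|)
        Filter.atTop (nhds |φ k - (x k - x 0)|) := ((hφ k).sub_const _).abs
    have hev : ∀ᶠ n : ℕ in Filter.atTop,
        |(x ((n : ℤ) • k) - x 0) / n - (x k - x 0)| ≤ 1 := by
      filter_upwards [Filter.eventually_ge_atTop 1] with n hn
      have hb := seqBound x hx k n
      have hn0 : (0 : ℝ) < n := by exact_mod_cast hn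
      have heq : (x ((n : ℤ) • k) - x 0) / n - (x k - x 0)
          = (x ((n : ℤ) • k) - x 0 - n * (x k - x 0)) / n := by field_simp
      rw [heq, abs_div, abs_of_pos hn0, div_le_one hn0]
      exact hb
    have := le_of_tendsto hT hev
    rwa [abs_sub_comm] at this
  have hadd : ∀ a b, φ (a + b) = φ a + φ b := by
    intro a b
    have hT : Filter.Tendsto
        (fun n : ℕ => (x ((n : ℤ) • (a + b)) - x 0) / n - (x ((n : ℤ) • a) - x 0) / n
          - (x ((n : ℤ) • b) - x 0) / n) Filter.atTop (nhds (φ (a + b) - φ a - φ b)) :=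
      ((hφ (a + b)).sub (hφ a)).sub (hφ b)
    have hT0 : Filter.Tendsto
        (fun n : ℕ => (x ((n : ℤ) • (a + b)) - x 0) / n - (x ((n : ℤ) • a) - x 0) / n
          - (x ((n : ℤ) • b) - x 0) / n) Filter.atTop (nhds 0) := by
      refine squeeze_zero_norm' (a := fun n : ℕ => 1 / (n : ℝ)) ?_
        tendsto_one_div_atTop_nhds_zero_nat
      filter_upwards [Filter.eventually_ge_atTop 1] with n hn
      have hq := quasi x hx ((n : ℤ) • a) ((n : ℤ) • b)
      have hn0 : (0 : ℝ) < n := by exact_mod_cast hn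
      have hsm : (n : ℤ) • (a + b) = (n : ℤ) • a + (n : ℤ) • b := smul_add _ _ _
      have heq : (x ((n : ℤ) • (a + b)) - x 0) / n - (x ((n : ℤ) • a) - x 0) / n
          - (x ((n : ℤ) • b) - x 0) / n
          = (x ((n : ℤ) • a + (n : ℤ) • b) - x ((n : ℤ) • a)
            - (x ((n : ℤ) • b) - x 0)) / n := by
        rw [hsm]; field_simp; ring
      rw [Real.norm_eq_abs, heq, abs_div, abs_of_pos hn0]
      gcongr
    have := tendsto_nhds_unique hT hT0
    linarith
  let ψ : (Fin d → ℤ) →+ ℝ := AddMonoidHom.mk' φ hadd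
  set ω : Fin d → ℝ := fun j => φ (Pi.single j 1) with hω
  have hlin : ∀ i : Fin d → ℤ, φ i = ∑ k, ω k * (i k : ℝ) := by
    intro i
    have hi : i = ∑ k, Pi.single k (i k) := (Finset.univ_sum_single i).symm
    have hsingle : ∀ k : Fin d,
        (Pi.single k (i k) : Fin d → ℤ) = (i k) • Pi.single k (1 : ℤ) := by
      intro k
      funext j
      by_cases h : j = k <;> simp [Pi.single_apply, h]
    calc φ i = ψ i := rfl
      _ = ψ (∑ k, Pi.single k (i k)) := by rw [← hi]
      _ = ∑ k, ψ (Pi.single k (i k)) := map_sum ψ _ _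
      _ = ∑ k, ω k * (i k : ℝ) := by
          refine Finset.sum_congr rfl fun k _ => ?_
          rw [hsingle k, map_zsmul ψ, zsmul_eq_mul]
          have hψ : ∀ v : Fin d → ℤ, ψ v = φ v := fun _ => rfl
          rw [hψ, hω, mul_comm]
  refine ⟨ω, ?_, ?_⟩
  · intro i
    rw [← hlin i]
    have h1 : Filter.Tendsto (fun n : ℕ => (x ((n : ℤ) • i) - x 0) / n + x 0 * (1 / n))
        Filter.atTop (nhds (φ i + x 0 * 0)) :=
      (hφ i).add (tendsto_one_div_atTop_nhds_zero_nat.const_mul (x 0))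
    rw [mul_zero, add_zero] at h1
    refine h1.congr fun n => ?_
    rcases Nat.eq_zero_or_pos n with h | h
    · simp [h]
    · have hn0 : (0 : ℝ) < n := by exact_mod_cast h
      field_simp
      ring
  · intro i
    rw [← hlin i]
    exact hbd i
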